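/- Let H = ⨁_M H_M with projections P_M, and let A, A' ∈ B(H). Then A_B = A'_B if and only if tr(ρA) = tr(ρA') for every positive trace-class operator ρ of unit trace commuting with all P_M. -/

import Mathlib

open scoped InnerProductSpace
open ContinuousLinearMap

set_option linter.unusedSectionVars false
set_option synthInstance.maxHeartbeats 1000000
set_option maxHeartbeats 1600000

noncomputable section
namespace Stmt13Aux

variable {H : Type*} [NormedAddCommGroup H] [InnerProductSpace ℂ H] [CompleteSpace H]
variable {κ : Type*} (b : HilbertBasis κ ℂ H)

lemma parseval_sq (y : H) : HasSum (fun j => ‖⟪b j, y⟫_ℂ‖ ^ 2) (‖y‖ ^ 2) := by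
  have h := b.hasSum_inner_mul_inner y y
  have h2 := (Complex.reCLM).hasSum h
  have e1 : ∀ j, (⟪y, b j⟫_ℂ * ⟪b j, y⟫_ℂ).re = ‖⟪b j, y⟫_ℂ‖ ^ 2 := by
    intro j
    rw [← inner_conj_symm (b j) y, RCLike.mul_conj, norm_inner_symm y (b j)]
    simp [RCLike.norm_conj, ← Complex.ofReal_pow]
  have e2 : (⟪y, y⟫_ℂ).re = ‖y‖ ^ 2 := by
    rw [inner_self_eq_norm_sq_to_K]; simp [← Complex.ofReal_pow]
  simpa [e1, e2, ← Complex.ofReal_pow] using h2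

lemma summable_fib {α β : Type*} {f : α × β → ℝ} (hf : ∀ p, 0 ≤ f p) {g : α → ℝ}
    (h1 : ∀ a, HasSum (fun y => f (a, y)) (g a)) (h2 : Summable g) : Summable f :=
  (summable_prod_of_nonneg hf).mpr
    ⟨fun a => (h1 a).summable, h2.congr fun a => ((h1 a).tsum_eq).symm⟩

lemma hs_entries (D : H →L[ℂ] H) (hD : Summable fun k => ‖D (b k)‖ ^ 2) :
    Summable fun p : κ × κ => ‖⟪b p.1, D (b p.2)⟫_ℂ‖ ^ 2 := by
  have hf : Summable fun q : κ × κ => ‖⟪b q.2, D (b q.1)⟫_ℂ‖ ^ 2 :=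
    summable_fib (fun p => sq_nonneg _) (fun j => parseval_sq b (D (b j))) hD
  exact hf.prod_symm

lemma hs_adjoint (D : H →L[ℂ] H) (hD : Summable fun k => ‖D (b k)‖ ^ 2) :
    Summable fun k => ‖(ContinuousLinearMap.adjoint D) (b k)‖ ^ 2 := by
  have hf := hs_entries b D hD
  have h2 := ((summable_prod_of_nonneg (fun p => sq_nonneg _)).mp hf).2
  refine h2.congr fun k => ?_
  rw [← (parseval_sq b ((ContinuousLinearMap.adjoint D) (b k))).tsum_eq]
  refine tsum_congr fun j => ?_
  rw [show ⟪b j, (ContinuousLinearMap.adjoint D) (b k)⟫_ℂ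
      = (starRingEnd ℂ) ⟪(ContinuousLinearMap.adjoint D) (b k), b j⟫_ℂ from
      (inner_conj_symm _ _).symm, adjoint_inner_left]
  rw [RCLike.norm_conj, norm_inner_symm]

lemma hs_comp_left (C D : H →L[ℂ] H) (hD : Summable fun k => ‖D (b k)‖ ^ 2) :
    Summable fun k => ‖C (D (b k))‖ ^ 2 := by
  refine Summable.of_nonneg_of_le (fun k => sq_nonneg _) (fun k => ?_)
    (hD.mul_left (‖C‖ ^ 2))
  calc ‖C (D (b k))‖ ^ 2 ≤ (‖C‖ * ‖D (b k)‖) ^ 2 := by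
        gcongr; exact C.le_opNorm _
    _ = ‖C‖ ^ 2 * ‖D (b k)‖ ^ 2 := by ring

lemma hs_comp_right (C D : H →L[ℂ] H) (hD : Summable fun k => ‖D (b k)‖ ^ 2) :
    Summable fun k => ‖D (C (b k))‖ ^ 2 := by
  have h1 := hs_adjoint b D hD
  have h2 := hs_comp_left b (ContinuousLinearMap.adjoint C) _ h1
  have h3 := hs_adjoint b (ContinuousLinearMap.adjoint C ∘L ContinuousLinearMap.adjoint D) h2
  refine h3.congr fun k => ?_
  congr 2
  rw [← adjoint_comp, adjoint_adjoint]
  rfl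

lemma summable_diag (U V : H →L[ℂ] H) (hU : Summable fun k => ‖U (b k)‖ ^ 2)
    (hV : Summable fun k => ‖V (b k)‖ ^ 2) :
    Summable fun k => ⟪b k, U (V (b k))⟫_ℂ := by
  have hU' := hs_adjoint b U hU
  refine Summable.of_norm (Summable.of_nonneg_of_le (fun k => norm_nonneg _) (fun k => ?_)
    ((hU'.add hV).mul_left (1/2 : ℝ)))
  have e : ⟪b k, U (V (b k))⟫_ℂ
      = ⟪(ContinuousLinearMap.adjoint U) (b k), V (b k)⟫_ℂ :=
    (adjoint_inner_left U _ _).symm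
  rw [e]
  have h1 := norm_inner_le_norm (𝕜 := ℂ) ((ContinuousLinearMap.adjoint U) (b k)) (V (b k))
  nlinarith [sq_nonneg (‖(ContinuousLinearMap.adjoint U) (b k)‖ - ‖V (b k)‖),
    norm_nonneg ((ContinuousLinearMap.adjoint U) (b k)), norm_nonneg (V (b k)),
    norm_nonneg (⟪b k, U (V (b k))⟫_ℂ)]

lemma cyc (U V : H →L[ℂ] H) (hU : Summable fun k => ‖U (b k)‖ ^ 2)
    (hV : Summable fun k => ‖V (b k)‖ ^ 2) :
    ∑' k, ⟪b k, U (V (b k))⟫_ℂ = ∑' k, ⟪b k, V (U (b k))⟫_ℂ := by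
  classical
  have hFsum : Summable (fun p : κ × κ => ⟪b p.1, U (b p.2)⟫_ℂ * ⟪b p.2, V (b p.1)⟫_ℂ) := by
    refine Summable.of_norm ?_
    have hs1 := hs_entries b U hU
    have hs2 := (hs_entries b V hV).prod_symm
    refine Summable.of_nonneg_of_le (fun p => norm_nonneg _) (fun p => ?_)
      ((hs1.add hs2).mul_left (1/2 : ℝ))
    obtain ⟨k, j⟩ := p
    simp only [norm_mul, Prod.swap_prod_mk]
    nlinarith [sq_nonneg (‖⟪b k, U (b j)⟫_ℂ‖ - ‖⟪b j, V (b k)⟫_ℂ‖),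
      norm_nonneg (⟪b k, U (b j)⟫_ℂ), norm_nonneg (⟪b j, V (b k)⟫_ℂ)]
  have hfib1 : ∀ k, HasSum (fun j => ⟪b k, U (b j)⟫_ℂ * ⟪b j, V (b k)⟫_ℂ)
      ⟪b k, U (V (b k))⟫_ℂ := by
    intro k
    have h := b.hasSum_inner_mul_inner ((ContinuousLinearMap.adjoint U) (b k)) (V (b k))
    simpa only [adjoint_inner_left] using h
  have hfib2 : ∀ j, HasSum (fun k => ⟪b k, U (b j)⟫_ℂ * ⟪b j, V (b k)⟫_ℂ)
      ⟪b j, V (U (b j))⟫_ℂ := by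
    intro j
    have h := b.hasSum_inner_mul_inner ((ContinuousLinearMap.adjoint V) (b j)) (U (b j))
    simp only [adjoint_inner_left] at h
    have e : (fun k => ⟪b k, U (b j)⟫_ℂ * ⟪b j, V (b k)⟫_ℂ)
        = fun k => ⟪b j, V (b k)⟫_ℂ * ⟪b k, U (b j)⟫_ℂ := funext fun k => mul_comm _ _
    rw [e]; exact h
  have huncurry : Summable (Function.uncurry fun k j => ⟪b k, U (b j)⟫_ℂ * ⟪b j, V (b k)⟫_ℂ) :=
    hFsum
  calc ∑' k, ⟪b k, U (V (b k))⟫_ℂ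
      = ∑' k, ∑' j, ⟪b k, U (b j)⟫_ℂ * ⟪b j, V (b k)⟫_ℂ :=
        tsum_congr fun k => ((hfib1 k).tsum_eq).symm
    _ = ∑' j, ∑' k, ⟪b k, U (b j)⟫_ℂ * ⟪b j, V (b k)⟫_ℂ := (Summable.tsum_comm huncurry).symm
    _ = ∑' j, ⟪b j, V (U (b j))⟫_ℂ := tsum_congr fun j => (hfib2 j).tsum_eq

variable {ι : Type*}

lemma pyth (P : ι → H →L[ℂ] H) (hproj : ∀ i, IsIdempotentElem (P i))
    (hsa : ∀ i, IsSelfAdjoint (P i)) (hcompl : ∀ x : H, HasSum (fun i => P i x) x) (x : H) :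
    HasSum (fun i => ‖P i x‖ ^ 2) (‖x‖ ^ 2) := by
  have h := (innerSL ℂ x).hasSum (hcompl x)
  have h2 := (Complex.reCLM).hasSum h
  have e : ∀ i, (⟪x, P i x⟫_ℂ).re = ‖P i x‖ ^ 2 := by
    intro i
    have hPP : P i (P i x) = P i x := by
      calc P i (P i x) = (P i * P i) x := rfl
        _ = P i x := by rw [hproj i]
    have hadj : ContinuousLinearMap.adjoint (P i) = P i := isSelfAdjoint_iff'.mp (hsa i)
    calc (⟪x, P i x⟫_ℂ).re
        = (⟪x, (ContinuousLinearMap.adjoint (P i)) (P i x)⟫_ℂ).re := by rw [hadj, hPP]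
      _ = (⟪P i x, P i x⟫_ℂ).re := by rw [adjoint_inner_right]
      _ = ‖P i x‖ ^ 2 := by rw [inner_self_eq_norm_sq_to_K]; simp [← Complex.ofReal_pow]
  have e2 : (⟪x, x⟫_ℂ).re = ‖x‖ ^ 2 := by
    rw [inner_self_eq_norm_sq_to_K]; simp [← Complex.ofReal_pow]
  simpa [e, e2, ← Complex.ofReal_pow] using h2

end Stmt13Aux

open Stmt13Aux ContinuousLinearMap in
/-- With `H = ⨁_{M∈S} H_M` (projections `P M`) and `A, A' ∈ B(H)`,
one has `A_B = A'_B` if and only if `tr(ρA) = tr(ρA')` for every positive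
trace-class `ρ` of unit trace commuting with all `P M`. -/
theorem stmt13 {ι : Type*} [Countable ι]
    {H : Type*} [NormedAddCommGroup H] [InnerProductSpace ℂ H] [CompleteSpace H]
    {κ : Type*} [Countable κ] (b : HilbertBasis κ ℂ H)
    (P : ι → H →L[ℂ] H)
    (hproj : ∀ i, IsIdempotentElem (P i)) (hsa : ∀ i, IsSelfAdjoint (P i))
    (horth : ∀ i j, i ≠ j → P i * P j = 0)
    (hcompl : ∀ x : H, HasSum (fun i => P i x) x)
    (A A' : H →L[ℂ] H)
    (AB AB' : H →L[ℂ] H)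
    (hAB : ∀ x : H, HasSum (fun i => P i (A (P i x))) (AB x))
    (hAB' : ∀ x : H, HasSum (fun i => P i (A' (P i x))) (AB' x)) :
    AB = AB' ↔
      ∀ ρ : H →L[ℂ] H, ρ.IsPositive →
        (Summable fun k => (⟪b k, ρ (b k)⟫_ℂ).re) →
        (∑' k, (⟪b k, ρ (b k)⟫_ℂ).re) = 1 →
        (∀ i, P i * ρ = ρ * P i) →
        (∑' k, ⟪b k, ρ (A (b k))⟫_ℂ) = ∑' k, ⟪b k, ρ (A' (b k))⟫_ℂ := by
  classical
  have hadj : ∀ i, ContinuousLinearMap.adjoint (P i) = P i := fun i =>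
    isSelfAdjoint_iff'.mp (hsa i)
  have hPapp : ∀ i (x : H), P i (P i x) = P i x := fun i x => by
    calc P i (P i x) = (P i * P i) x := rfl
      _ = P i x := by rw [hproj i]
  have hPmove : ∀ i (v y : H), ⟪v, P i y⟫_ℂ = ⟪P i v, y⟫_ℂ := fun i v y => by
    rw [← adjoint_inner_left (P i) y v, hadj i]
  have hPinner : ∀ i (z w : H), ⟪P i z, P i w⟫_ℂ = ⟪z, P i w⟫_ℂ := fun i z w => by
    rw [← hPmove i z (P i w), hPapp i w]
  constructor
  · -- Forward direction
    intro h ρ hpos hsum _htr hcomm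
    have hρ0 : (0 : H →L[ℂ] H) ≤ ρ := ρ.nonneg_iff_isPositive.mpr hpos
    set s : H →L[ℂ] H := CFC.sqrt ρ with hsdef
    have hs0 : (0 : H →L[ℂ] H) ≤ s := CFC.sqrt_nonneg (a := ρ)
    have hss : s * s = ρ := CFC.sqrt_mul_sqrt_self ρ hρ0
    have hssa : IsSelfAdjoint s := IsSelfAdjoint.of_nonneg hs0
    have hsadj : ContinuousLinearMap.adjoint s = s := isSelfAdjoint_iff'.mp hssa
    have hsq_app : ∀ y : H, ρ y = s (s y) := fun y => by rw [← hss]; rfl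
    have hinner_s : ∀ (x y : H), ⟪x, s y⟫_ℂ = ⟪s x, y⟫_ℂ := fun x y => by
      rw [← adjoint_inner_left s y x, hsadj]
    have hcs : ∀ i, s * P i = P i * s := by
      intro i
      set U : H →L[ℂ] H := P i + P i - 1 with hU
      have hUsq : U * U = 1 := by
        have hp : P i * P i = P i := hproj i
        rw [hU]
        simp only [mul_sub, sub_mul, add_mul, mul_add, mul_one, one_mul, hp]
        abel
      have hUsa : IsSelfAdjoint U := ((hsa i).add (hsa i)).sub (IsSelfAdjoint.one (R := H →L[ℂ] H))
      have hUρ : U * ρ = ρ * U := by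
        rw [hU]
        simp only [mul_sub, sub_mul, add_mul, mul_add, one_mul, mul_one, hcomm i]
      have key : s = U * s * U := by
        have hmul : (U * s * U) * (U * s * U) = ρ := ?_
        · have hk := CFC.sqrt_unique (a := ρ) (b := U * s * U) hmul
            (by have hcn := star_left_conjugate_nonneg hs0 U
                rwa [hUsa.star_eq] at hcn)
          rw [← hsdef] at hk
          exact hk
        · calc (U * s * U) * (U * s * U) = U * (s * (U * U) * s) * U := by noncomm_ring
            _ = U * (s * s) * U := by rw [hUsq, mul_one]
            _ = U * ρ * U := by rw [hss]
            _ = ρ * (U * U) := by rw [hUρ, mul_assoc]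
            _ = ρ := by rw [hUsq, mul_one]
      have hsU : s * U = U * s := by
        calc s * U = (U * s * U) * U := by rw [← key]
          _ = (U * s) * (U * U) := by rw [mul_assoc (U * s) U U]
          _ = U * s := by rw [hUsq, mul_one]
      have h2 : s * (P i + P i) = (P i + P i) * s := by
        have hU1 : U + 1 = P i + P i := by rw [hU]; abel
        calc s * (P i + P i) = s * (U + 1) := by rw [hU1]
          _ = s * U + s := by rw [mul_add, mul_one]
          _ = U * s + s := by rw [hsU]
          _ = (U + 1) * s := by rw [add_mul, one_mul]
          _ = (P i + P i) * s := by rw [hU1]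
      have h3 : (2 : ℂ) • (s * P i) = (2 : ℂ) • (P i * s) := by
        rw [two_smul, two_smul]
        calc s * P i + s * P i = s * (P i + P i) := by rw [mul_add]
          _ = (P i + P i) * s := h2
          _ = P i * s + P i * s := by rw [add_mul]
      exact smul_right_injective (H →L[ℂ] H) (two_ne_zero) h3
    have hsS : Summable fun k => ‖s (b k)‖ ^ 2 := by
      refine hsum.congr fun k => ?_
      calc (⟪b k, ρ (b k)⟫_ℂ).re = (⟪s (b k), s (b k)⟫_ℂ).re := by
            rw [hsq_app, hinner_s]
        _ = ‖s (b k)‖ ^ 2 := by rw [inner_self_eq_norm_sq_to_K]; simp [← Complex.ofReal_pow]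
    have hdiag : ∀ j x, P j (A (P j x)) = P j (A' (P j x)) := by
      intro j x
      have key : ∀ (B BB : H →L[ℂ] H), (∀ y, HasSum (fun i => P i (B (P i y))) (BB y)) →
          P j (BB x) = P j (B (P j x)) := by
        intro B BB hB
        have h1 := (P j).hasSum (hB x)
        have heq : (fun i => P j (P i (B (P i x))))
            = fun i => if i = j then P j (B (P j x)) else 0 := by
          funext i
          by_cases hij : i = j
          · subst hij
            rw [if_pos rfl]
            exact hPapp i (B (P i x))
          · rw [if_neg hij]
            calc P j (P i (B (P i x))) = (P j * P i) (B (P i x)) := rfl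
              _ = 0 := by rw [horth j i (Ne.symm hij)]; rfl
        rw [heq] at h1
        exact h1.unique (hasSum_ite_eq j _)
      rw [← key A AB hAB, ← key A' AB' hAB', h]
    set T : H →L[ℂ] H := A - A' with hT
    have hTd : ∀ j x, P j (T (P j x)) = 0 := by
      intro j x
      rw [hT]
      simp only [ContinuousLinearMap.sub_apply, map_sub]
      rw [hdiag j x, sub_self]
    have hsA : ∀ C : H →L[ℂ] H, Summable fun k => ⟪b k, ρ (C (b k))⟫_ℂ := by
      intro C
      have hsc : Summable fun k => ‖(s ∘L C) (b k)‖ ^ 2 :=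
        (hs_comp_right b C s hsS).congr fun k => by rw [ContinuousLinearMap.comp_apply]
      have h1 := summable_diag b s (s ∘L C) hsS hsc
      refine h1.congr fun k => ?_
      rw [ContinuousLinearMap.comp_apply, ← hsq_app]
    have hkey : ∑' k, ⟪b k, ρ (T (b k))⟫_ℂ = 0 := by
      have hsT : Summable fun k => ‖(s ∘L T) (b k)‖ ^ 2 :=
        (hs_comp_right b T s hsS).congr fun k => by rw [ContinuousLinearMap.comp_apply]
      have step1 : ∑' k, ⟪b k, ρ (T (b k))⟫_ℂ = ∑' k, ⟪b k, s (T (s (b k)))⟫_ℂ := by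
        have c1 := cyc b s (s ∘L T) hsS hsT
        calc ∑' k, ⟪b k, ρ (T (b k))⟫_ℂ = ∑' k, ⟪b k, s ((s ∘L T) (b k))⟫_ℂ :=
              tsum_congr fun k => by rw [ContinuousLinearMap.comp_apply, hsq_app]
          _ = ∑' k, ⟪b k, (s ∘L T) (s (b k))⟫_ℂ := c1
          _ = ∑' k, ⟪b k, s (T (s (b k)))⟫_ℂ :=
              tsum_congr fun k => by rw [ContinuousLinearMap.comp_apply]
      set F : κ × ι → ℂ := fun p => ⟪b p.1, s (T (P p.2 (s (b p.1))))⟫_ℂ with hFdef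
      have hFsum : Summable F := by
        have hTs : Summable fun k =>
            ‖((ContinuousLinearMap.adjoint T) ∘L s) (b k)‖ ^ 2 :=
          (hs_comp_left b (ContinuousLinearMap.adjoint T) s hsS).congr fun k => by
            rw [ContinuousLinearMap.comp_apply]
        have hp1 : Summable fun p : κ × ι =>
            ‖P p.2 (((ContinuousLinearMap.adjoint T) ∘L s) (b p.1))‖ ^ 2 :=
          summable_fib (fun p => sq_nonneg _)
            (fun k => pyth P hproj hsa hcompl (((ContinuousLinearMap.adjoint T) ∘L s) (b k)))
            hTs
        have hp2 : Summable fun p : κ × ι => ‖P p.2 (s (b p.1))‖ ^ 2 :=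
          summable_fib (fun p => sq_nonneg _) (fun k => pyth P hproj hsa hcompl (s (b k))) hsS
        refine Summable.of_norm (Summable.of_nonneg_of_le (fun p => norm_nonneg _)
          (fun p => ?_) ((hp1.add hp2).mul_left (1/2 : ℝ)))
        obtain ⟨k, i⟩ := p
        have e : F (k, i)
            = ⟪P i ((ContinuousLinearMap.adjoint T) (s (b k))), P i (s (b k))⟫_ℂ := by
          rw [hFdef]
          calc ⟪b k, s (T (P i (s (b k))))⟫_ℂ = ⟪s (b k), T (P i (s (b k)))⟫_ℂ :=
                hinner_s _ _
            _ = ⟪(ContinuousLinearMap.adjoint T) (s (b k)), P i (s (b k))⟫_ℂ :=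
                (adjoint_inner_left T _ _).symm
            _ = ⟪P i ((ContinuousLinearMap.adjoint T) (s (b k))), P i (s (b k))⟫_ℂ :=
                (hPinner i _ _).symm
        rw [e]
        have hb := norm_inner_le_norm (𝕜 := ℂ)
          (P i ((ContinuousLinearMap.adjoint T) (s (b k)))) (P i (s (b k)))
        simp only [ContinuousLinearMap.comp_apply]
        nlinarith [sq_nonneg (‖P i ((ContinuousLinearMap.adjoint T) (s (b k)))‖
            - ‖P i (s (b k))‖),
          norm_nonneg (P i ((ContinuousLinearMap.adjoint T) (s (b k)))),
          norm_nonneg (P i (s (b k))),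
          norm_nonneg (⟪P i ((ContinuousLinearMap.adjoint T) (s (b k))), P i (s (b k))⟫_ℂ)]
      have step2 : ∑' k, ⟪b k, s (T (s (b k)))⟫_ℂ = ∑' i, ∑' k, F (k, i) := by
        have hfib : ∀ k, HasSum (fun i => F (k, i)) ⟪b k, s (T (s (b k)))⟫_ℂ := by
          intro k
          have h0 := (((innerSL ℂ (b k)).comp (s ∘L T))).hasSum (hcompl (s (b k)))
          simpa only [hFdef, ContinuousLinearMap.comp_apply, innerSL_apply_apply] using h0
        have huncurry : Summable (Function.uncurry fun k i => F (k, i)) := hFsum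
        calc ∑' k, ⟪b k, s (T (s (b k)))⟫_ℂ = ∑' k, ∑' i, F (k, i) :=
              tsum_congr fun k => ((hfib k).tsum_eq).symm
          _ = ∑' i, ∑' k, F (k, i) := (Summable.tsum_comm huncurry).symm
      have step3 : ∀ i, ∑' k, F (k, i) = 0 := by
        intro i
        set U' : H →L[ℂ] H := s ∘L (T ∘L P i) with hU'
        set V' : H →L[ℂ] H := P i ∘L s with hV'
        have hUs : Summable fun k => ‖U' (b k)‖ ^ 2 :=
          (hs_comp_right b (T ∘L P i) s hsS).congr fun k => by rw [hU']; rfl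
        have hVs : Summable fun k => ‖V' (b k)‖ ^ 2 :=
          (hs_comp_left b (P i) s hsS).congr fun k => by rw [hV']; rfl
        have c2 := cyc b U' V' hUs hVs
        have e1 : ∀ k, F (k, i) = ⟪b k, U' (V' (b k))⟫_ℂ := by
          intro k
          rw [hFdef, hU', hV']
          simp only [ContinuousLinearMap.comp_apply]
          rw [hPapp i (s (b k))]
        have e2 : ∀ k, V' (U' (b k)) = 0 := by
          intro k
          rw [hU', hV']
          simp only [ContinuousLinearMap.comp_apply]
          have hmove : P i (s (s (T (P i (b k))))) = ρ (P i (T (P i (b k)))) := by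
            calc P i (s (s (T (P i (b k))))) = P i (ρ (T (P i (b k)))) := by
                  rw [← hsq_app]
              _ = (P i * ρ) (T (P i (b k))) := rfl
              _ = (ρ * P i) (T (P i (b k))) := by rw [hcomm i]
              _ = ρ (P i (T (P i (b k)))) := rfl
          rw [hmove, hTd i (b k), map_zero]
        calc ∑' k, F (k, i) = ∑' k, ⟪b k, U' (V' (b k))⟫_ℂ := tsum_congr e1
          _ = ∑' k, ⟪b k, V' (U' (b k))⟫_ℂ := c2
          _ = ∑' k, (0 : ℂ) := tsum_congr fun k => by rw [e2 k, inner_zero_right]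
          _ = 0 := tsum_zero
      calc ∑' k, ⟪b k, ρ (T (b k))⟫_ℂ = ∑' i, ∑' k, F (k, i) := by rw [step1, step2]
        _ = ∑' i, (0 : ℂ) := tsum_congr step3
        _ = 0 := tsum_zero
    have hA := hsA A
    have hA' := hsA A'
    have hsub : ∑' k, (⟪b k, ρ (A (b k))⟫_ℂ - ⟪b k, ρ (A' (b k))⟫_ℂ) = 0 := by
      rw [← hkey]
      refine tsum_congr fun k => ?_
      rw [hT]
      simp only [ContinuousLinearMap.sub_apply, map_sub, inner_sub_right]
    rw [Summable.tsum_sub hA hA'] at hsub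
    exact sub_eq_zero.mp hsub
  · -- Backward direction
    intro h
    have hdiagIn : ∀ (i : ι) (w : H), ⟪P i w, A (P i w)⟫_ℂ = ⟪P i w, A' (P i w)⟫_ℂ := by
      intro i w
      by_cases hw : P i w = 0
      · rw [hw]; simp
      · set u : H := P i w with hu
        set c : ℝ := ‖u‖ with hc
        have hc0 : c ≠ 0 := by rw [hc]; exact norm_ne_zero_iff.mpr hw
        have hcC : ((c : ℝ) : ℂ) ≠ 0 := by exact_mod_cast hc0
        have hnn : (0 : ℝ) ≤ c := by rw [hc]; exact norm_nonneg u
        set z : H := ((c : ℂ)⁻¹) • u with hz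
        have hz1 : ‖z‖ = 1 := by
          rw [hz, norm_smul, ← hc, norm_inv, Complex.norm_real, Real.norm_eq_abs,
            abs_of_nonneg hnn, inv_mul_cancel₀ hc0]
        have hPu : P i u = u := by rw [hu]; exact hPapp i w
        have hPz : ∀ j, P j z = if j = i then z else 0 := by
          intro j
          by_cases hji : j = i
          · subst hji; rw [if_pos rfl, hz, map_smul, hPu]
          · rw [if_neg hji, hz, map_smul, hu]
            have e0 : P j (P i w) = (P j * P i) w := rfl
            rw [e0, horth j i hji]
            simp
        set ρ : H →L[ℂ] H := (innerSL ℂ z).smulRight z with hρ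
        have hρapp : ∀ x, ρ x = ⟪z, x⟫_ℂ • z := fun x => by
          rw [hρ]; simp [ContinuousLinearMap.smulRight_apply]
        have hρadj : ContinuousLinearMap.adjoint ρ = ρ := by
          refine ContinuousLinearMap.ext fun x => ?_
          refine ext_inner_left ℂ fun v => ?_
          rw [adjoint_inner_right]
          rw [hρapp, hρapp, inner_smul_left, inner_smul_right, inner_conj_symm]
          ring
        have hρsa : IsSelfAdjoint ρ := isSelfAdjoint_iff'.mpr hρadj
        have hρpos : ρ.IsPositive := by
          refine ⟨ContinuousLinearMap.isSelfAdjoint_iff_isSymmetric.mp hρsa, fun x => ?_⟩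
          rw [ContinuousLinearMap.reApplyInnerSelf_apply]
          rw [hρapp, inner_smul_left, RCLike.conj_mul]
          simp [← Complex.ofReal_pow]
        have e : ∀ k, (⟪b k, ρ (b k)⟫_ℂ).re = ‖⟪b k, z⟫_ℂ‖ ^ 2 := by
          intro k
          rw [hρapp, inner_smul_right,
            show ⟪z, b k⟫_ℂ = (starRingEnd ℂ) ⟪b k, z⟫_ℂ from (inner_conj_symm _ _).symm,
            RCLike.conj_mul]
          simp [← Complex.ofReal_pow]
        have hρsum : Summable fun k => (⟪b k, ρ (b k)⟫_ℂ).re :=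
          ((parseval_sq b z).summable).congr fun k => (e k).symm
        have hρtr : (∑' k, (⟪b k, ρ (b k)⟫_ℂ).re) = 1 := by
          rw [tsum_congr e, (parseval_sq b z).tsum_eq, hz1]
          norm_num
        have hρcomm : ∀ j, P j * ρ = ρ * P j := by
          intro j
          refine ContinuousLinearMap.ext fun x => ?_
          have lhs : (P j * ρ) x = ⟪z, x⟫_ℂ • P j z := by
            show P j (ρ x) = _
            rw [hρapp, map_smul]
          have rhs : (ρ * P j) x = ⟪P j z, x⟫_ℂ • z := by
            show ρ (P j x) = _
            rw [hρapp, hPmove j z x]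
          rw [lhs, rhs, hPz j]
          by_cases hji : j = i
          · rw [if_pos hji]
          · rw [if_neg hji]
            simp
        have hres := h ρ hρpos hρsum hρtr hρcomm
        have ecalc : ∀ C : H →L[ℂ] H, (∑' k, ⟪b k, ρ (C (b k))⟫_ℂ) = ⟪z, C z⟫_ℂ := by
          intro C
          have hps := b.hasSum_inner_mul_inner ((ContinuousLinearMap.adjoint C) z) z
          simp only [adjoint_inner_left] at hps
          rw [← hps.tsum_eq]
          refine tsum_congr fun k => ?_
          rw [hρapp, inner_smul_right]
        rw [ecalc A, ecalc A'] at hres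
        have escale : ∀ C : H →L[ℂ] H,
            ⟪z, C z⟫_ℂ = (c : ℂ)⁻¹ * ((c : ℂ)⁻¹ * ⟪u, C u⟫_ℂ) := by
          intro C
          rw [hz, map_smul, inner_smul_left, inner_smul_right, map_inv₀,
            Complex.conj_ofReal]
        rw [escale A, escale A'] at hres
        have h1 := mul_left_cancel₀ (inv_ne_zero hcC) hres
        exact mul_left_cancel₀ (inv_ne_zero hcC) h1
    have hoff : ∀ (i : ι) (v x : H), ⟪P i v, A (P i x)⟫_ℂ = ⟪P i v, A' (P i x)⟫_ℂ := by
      intro i v x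
      have hd : ∀ w, ⟪P i w, A (P i w)⟫_ℂ - ⟪P i w, A' (P i w)⟫_ℂ = 0 := fun w => by
        rw [hdiagIn i w, sub_self]
      have hexp : ∀ y w : H, (⟪P i y, A (P i w)⟫_ℂ - ⟪P i y, A' (P i w)⟫_ℂ)
          + (⟪P i w, A (P i y)⟫_ℂ - ⟪P i w, A' (P i y)⟫_ℂ) = 0 := by
        intro y w
        have h0 := hd (y + w)
        simp only [map_add, inner_add_left, inner_add_right] at h0
        have hy := hd y
        have hw := hd w
        linear_combination h0 - hy - hw
      have hexp2 : ∀ y w : H, (⟪P i y, A (P i w)⟫_ℂ - ⟪P i y, A' (P i w)⟫_ℂ)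
          = (⟪P i w, A (P i y)⟫_ℂ - ⟪P i w, A' (P i y)⟫_ℂ) := by
        intro y w
        have h0 := hd (w + Complex.I • y)
        simp only [map_add, map_smul, inner_add_left, inner_add_right, inner_smul_left,
          inner_smul_right, Complex.conj_I] at h0
        have hy := hd y
        have hw := hd w
        have h1 : Complex.I * ((⟪P i w, A (P i y)⟫_ℂ - ⟪P i w, A' (P i y)⟫_ℂ)
            - (⟪P i y, A (P i w)⟫_ℂ - ⟪P i y, A' (P i w)⟫_ℂ)) = 0 := by
          linear_combination h0 - hw + (Complex.I * Complex.I) * hy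
        have h2 := (mul_eq_zero.mp h1).resolve_left Complex.I_ne_zero
        linear_combination -h2
      have hsum0 := hexp v x
      have hsym := hexp2 v x
      have h3 : (⟪P i v, A (P i x)⟫_ℂ - ⟪P i v, A' (P i x)⟫_ℂ)
          + (⟪P i v, A (P i x)⟫_ℂ - ⟪P i v, A' (P i x)⟫_ℂ) = 0 := by
        linear_combination hsum0 + hsym
      have h4 := add_self_eq_zero.mp h3
      linear_combination h4
    refine ContinuousLinearMap.ext fun x => ?_
    have hterm : (fun i => P i (A' (P i x))) = fun i => P i (A (P i x)) := by
      funext i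
      refine ext_inner_left ℂ fun v => ?_
      rw [hPmove i v (A' (P i x)), hPmove i v (A (P i x)), hoff i v x]
    have hB' := hAB' x
    rw [hterm] at hB'
    exact (hAB x).unique hB'

end
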